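/- Let ψ : ℝ → ℝ be a Schwartz function and define G(ρ,y) = ρ^{−2} (1 + cosh y)^{−1} ψ(ρ sinh y) for ρ ≥ 1, y ∈ ℝ. Then for every n, m ∈ ℕ and every p ∈ [1,∞] there is a constant C = C(n,m,p,ψ) such that for all ρ ≥ 1: ‖ ∂_ρ^n ( ρ^{−m} ∂_y^m G(ρ,·) ) ‖_{L^p(ℝ, dy)} ≤ C ρ^{−2 − 1/p}, with the convention 1/∞ = 0. -/

import Mathlib

open Real MeasureTheory
open scoped ENNReal

namespace Stmt6

/-- A symbolic term `c * r^s * sinh y ^ i * cosh y ^ l * ((1+cosh y)^j)⁻¹ * ψ^{(k)}(r sinh y)`. -/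
structure Tm where
  k : ℕ
  i : ℕ
  l : ℕ
  j : ℕ
  s : ℤ
  c : ℝ

noncomputable def Tm.val (ψ : ℝ → ℝ) (t : Tm) (r y : ℝ) : ℝ :=
  t.c * r ^ t.s * Real.sinh y ^ t.i * Real.cosh y ^ t.l * ((1 + Real.cosh y) ^ t.j)⁻¹ *
    iteratedDeriv t.k ψ (r * Real.sinh y)

noncomputable def lval (ψ : ℝ → ℝ) (L : List Tm) (r y : ℝ) : ℝ :=
  (L.map fun t => t.val ψ r y).sum

/-- formal `y`-derivative of a term -/
def Tm.dy (t : Tm) : List Tm :=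
  [⟨t.k, t.i - 1, t.l + 1, t.j, t.s, t.c * t.i⟩,
   ⟨t.k, t.i + 1, t.l - 1, t.j, t.s, t.c * t.l⟩,
   ⟨t.k, t.i + 1, t.l, t.j + 1, t.s, -(t.c * t.j)⟩,
   ⟨t.k + 1, t.i, t.l + 1, t.j, t.s + 1, t.c⟩]

/-- formal `r`-derivative of a term -/
def Tm.dr (t : Tm) : List Tm :=
  [⟨t.k, t.i, t.l, t.j, t.s - 1, t.c * t.s⟩,
   ⟨t.k + 1, t.i + 1, t.l, t.j, t.s, t.c⟩]

/-- shift the `r`-exponent -/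
def Tm.shift (d : ℤ) (t : Tm) : Tm := ⟨t.k, t.i, t.l, t.j, t.s + d, t.c⟩

lemma lval_nil (ψ : ℝ → ℝ) (r y : ℝ) : lval ψ [] r y = 0 := rfl

lemma lval_append (ψ : ℝ → ℝ) (L1 L2 : List Tm) (r y : ℝ) :
    lval ψ (L1 ++ L2) r y = lval ψ L1 r y + lval ψ L2 r y := by
  simp [lval]

lemma lval_cons (ψ : ℝ → ℝ) (t : Tm) (L : List Tm) (r y : ℝ) :
    lval ψ (t :: L) r y = t.val ψ r y + lval ψ L r y := by
  simp [lval]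

lemma lval_bind (ψ : ℝ → ℝ) (L : List Tm) (g : Tm → List Tm) (r y : ℝ) :
    lval ψ (L.flatMap g) r y = (L.map (fun t => lval ψ (g t) r y)).sum := by
  induction L with
  | nil => simp [lval]
  | cons a l ih =>
      simp only [List.flatMap_cons, List.map_cons, List.sum_cons]
      rw [lval_append, ih]

lemma hasDerivAt_list (L : List Tm) (F : Tm → ℝ → ℝ) (F' : Tm → ℝ) (x : ℝ)
    (h : ∀ t ∈ L, HasDerivAt (F t) (F' t) x) :
    HasDerivAt (fun x => (L.map (fun t => F t x)).sum) ((L.map F').sum) x := by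
  induction L with
  | nil => simpa using hasDerivAt_const x (0 : ℝ)
  | cons a l ih =>
      have ha := h a (by simp)
      have hl := ih (fun t ht => h t (by simp [ht]))
      simp only [List.map_cons, List.sum_cons]
      exact ha.add hl

section Derivs

variable {ψ : ℝ → ℝ}

/-- abstract hypothesis: `ψ` is smooth, expressed through iterated derivatives -/
def SmoothHyp (ψ : ℝ → ℝ) : Prop :=
  ∀ k : ℕ, (∀ x : ℝ, HasDerivAt (iteratedDeriv k ψ) (iteratedDeriv (k + 1) ψ x) x) ∧
    Continuous (iteratedDeriv k ψ)

lemma inv_pow_deriv_eq {x s : ℝ} (hx : 0 < x) (j : ℕ) :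
    -((j : ℝ) * x ^ (j - 1) * s) / (x ^ j) ^ 2 = -((j : ℝ) * s) * (x ^ (j + 1))⁻¹ := by
  cases j with
  | zero => simp
  | succ j' =>
      have hx' : x ≠ 0 := ne_of_gt hx
      rw [Nat.add_sub_cancel]
      field_simp
      ring

/-- `y`-derivative of a single term -/
lemma tm_hasDerivAt_y (hψ : SmoothHyp ψ) (t : Tm) {r : ℝ} (hr : 0 < r) (y : ℝ) :
    HasDerivAt (fun y => t.val ψ r y) (lval ψ t.dy r y) y := by
  have h1 : HasDerivAt (fun y : ℝ => Real.sinh y ^ t.i)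
      ((t.i : ℝ) * Real.sinh y ^ (t.i - 1) * Real.cosh y) y :=
    (Real.hasDerivAt_sinh y).pow t.i
  have h2 : HasDerivAt (fun y : ℝ => Real.cosh y ^ t.l)
      ((t.l : ℝ) * Real.cosh y ^ (t.l - 1) * Real.sinh y) y :=
    (Real.hasDerivAt_cosh y).pow t.l
  have hP : HasDerivAt (fun y : ℝ => 1 + Real.cosh y) (Real.sinh y) y :=
    (Real.hasDerivAt_cosh y).const_add 1
  have hPpos : (0:ℝ) < 1 + Real.cosh y := by positivity
  have h3 : HasDerivAt (fun y : ℝ => ((1 + Real.cosh y) ^ t.j)⁻¹)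
      (-((t.j : ℝ) * (1 + Real.cosh y) ^ (t.j - 1) * Real.sinh y) / ((1 + Real.cosh y) ^ t.j) ^ 2)
      y := (hP.pow t.j).inv (pow_pos hPpos t.j).ne'
  have hg : HasDerivAt (fun y : ℝ => r * Real.sinh y) (r * Real.cosh y) y :=
    (Real.hasDerivAt_sinh y).const_mul r
  have h4 : HasDerivAt (fun y : ℝ => iteratedDeriv t.k ψ (r * Real.sinh y))
      (iteratedDeriv (t.k + 1) ψ (r * Real.sinh y) * (r * Real.cosh y)) y :=
    by have h := ((hψ t.k).1 (r * Real.sinh y)).comp y hg; exact h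
  have H := ((((hasDerivAt_const y (t.c * r ^ t.s)).mul h1).mul h2).mul h3).mul h4
  refine H.congr_deriv ?_
  have hrs : r ^ (t.s + 1) = r ^ t.s * r := by
    rw [zpow_add_one₀ (ne_of_gt hr)]
  simp only [lval, Tm.dy, Tm.val, List.map_cons, List.map_nil, List.sum_cons, List.sum_nil,
    add_zero, hrs, Pi.mul_apply]
  rw [show -((t.j : ℝ) * (1 + Real.cosh y) ^ (t.j - 1) * Real.sinh y) /
      ((1 + Real.cosh y) ^ t.j) ^ 2
      = -((t.j : ℝ) * Real.sinh y) * ((1 + Real.cosh y) ^ (t.j + 1))⁻¹ from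
    inv_pow_deriv_eq hPpos t.j]
  ring

/-- `r`-derivative of a single term -/
lemma tm_hasDerivAt_r (hψ : SmoothHyp ψ) (t : Tm) {r : ℝ} (hr : 0 < r) (y : ℝ) :
    HasDerivAt (fun r => t.val ψ r y) (lval ψ t.dr r y) r := by
  have hR : HasDerivAt (fun r : ℝ => r ^ t.s) ((t.s : ℝ) * r ^ (t.s - 1)) r :=
    hasDerivAt_zpow t.s r (Or.inl (ne_of_gt hr))
  have hg : HasDerivAt (fun r : ℝ => r * Real.sinh y) (Real.sinh y) r :=
    hasDerivAt_mul_const (Real.sinh y)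
  have h4 : HasDerivAt (fun r : ℝ => iteratedDeriv t.k ψ (r * Real.sinh y))
      (iteratedDeriv (t.k + 1) ψ (r * Real.sinh y) * Real.sinh y) r :=
    by have h := ((hψ t.k).1 (r * Real.sinh y)).comp r hg; exact h
  have H := (((((hasDerivAt_const r t.c).mul hR).mul_const
      (Real.sinh y ^ t.i)).mul_const (Real.cosh y ^ t.l)).mul_const
      (((1 + Real.cosh y) ^ t.j)⁻¹)).mul h4
  refine H.congr_deriv ?_
  simp only [lval, Tm.dr, Tm.val, List.map_cons, List.map_nil, List.sum_cons, List.sum_nil,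
    add_zero, Pi.mul_apply]
  ring

lemma hasDerivAt_lval_r (hψ : SmoothHyp ψ) (L : List Tm) {r : ℝ} (hr : 0 < r) (y : ℝ) :
    HasDerivAt (fun r => lval ψ L r y) (lval ψ (L.flatMap Tm.dr) r y) r := by
  rw [lval_bind]
  exact hasDerivAt_list L (fun t r => t.val ψ r y) (fun t => lval ψ t.dr r y) r
    (fun t _ => tm_hasDerivAt_r hψ t hr y)

/-- Stage A: the inner `y`-derivatives. -/
lemma stageA (hψ : SmoothHyp ψ) (m : ℕ) :
    ∃ L : List Tm, (∀ t ∈ L, t.s = t.k ∧ t.k ≤ m) ∧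
      ∀ r : ℝ, 0 < r → ∀ y : ℝ,
        iteratedDeriv m (fun z => (1 + Real.cosh z)⁻¹ * ψ (r * Real.sinh z)) y
          = lval ψ L r y := by
  induction m with
  | zero =>
      refine ⟨[⟨0, 0, 0, 1, 0, 1⟩], by simp, fun r hr y => ?_⟩
      simp [lval, Tm.val, iteratedDeriv_zero]
  | succ m ih =>
      obtain ⟨L, hLinv, hL⟩ := ih
      refine ⟨L.flatMap Tm.dy, ?_, fun r hr y => ?_⟩
      · intro t' ht'
        simp only [List.mem_flatMap] at ht'
        obtain ⟨t, htL, ht'⟩ := ht'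
        obtain ⟨hs, hk⟩ := hLinv t htL
        simp only [Tm.dy, List.mem_cons, List.mem_singleton, List.not_mem_nil, or_false] at ht'
        rcases ht' with h | h | h | h <;> subst h <;> simp <;> omega
      · rw [iteratedDeriv_succ]
        have hfun : iteratedDeriv m (fun z => (1 + Real.cosh z)⁻¹ * ψ (r * Real.sinh z))
            = fun y => lval ψ L r y := funext (hL r hr)
        rw [hfun]
        have hder : HasDerivAt (fun y => lval ψ L r y) (lval ψ (L.flatMap Tm.dy) r y) y := by
          rw [lval_bind]
          exact hasDerivAt_list L (fun t y => t.val ψ r y) (fun t => lval ψ t.dy r y) y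
            (fun t _ => tm_hasDerivAt_y hψ t hr y)
        exact hder.deriv

lemma lval_shift (ψ : ℝ → ℝ) (L : List Tm) (d : ℤ) {r : ℝ} (hr : r ≠ 0) (y : ℝ) :
    lval ψ (L.map (Tm.shift d)) r y = r ^ d * lval ψ L r y := by
  induction L with
  | nil => simp [lval]
  | cons a l ih =>
      simp only [List.map_cons, lval_cons, ih, Tm.shift, Tm.val, mul_add]
      congr 1
      rw [zpow_add₀ hr]
      ring

/-- Stage B, base case. -/
lemma stageB0 (hψ : SmoothHyp ψ) (hs : ContDiff ℝ (⊤ : ℕ∞) ψ) (m : ℕ) :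
    ∃ L : List Tm, (∀ t ∈ L, t.s ≤ -2) ∧
      ∀ r : ℝ, 0 < r → ∀ y : ℝ,
        (r ^ m)⁻¹ * iteratedDeriv m
            (fun z : ℝ => (r ^ 2)⁻¹ * (1 + Real.cosh z)⁻¹ * ψ (r * Real.sinh z)) y
          = lval ψ L r y := by
  obtain ⟨L, hLinv, hL⟩ := stageA hψ m
  refine ⟨L.map (Tm.shift (-(m : ℤ) - 2)), ?_, fun r hr y => ?_⟩
  · intro t' ht'
    simp only [List.mem_map] at ht'
    obtain ⟨t, htL, rfl⟩ := ht'
    obtain ⟨hs', hk⟩ := hLinv t htL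
    simp only [Tm.shift]
    omega
  · have hinner : (fun z : ℝ => (r ^ 2)⁻¹ * (1 + Real.cosh z)⁻¹ * ψ (r * Real.sinh z))
        = fun z : ℝ => (r ^ 2)⁻¹ * ((1 + Real.cosh z)⁻¹ * ψ (r * Real.sinh z)) := by
      funext z; ring
    have hsm : ContDiff ℝ (m : ℕ∞) (fun z : ℝ => (1 + Real.cosh z)⁻¹ * ψ (r * Real.sinh z)) := by
      have h1 : ContDiff ℝ (m : ℕ∞) (fun z : ℝ => (1 + Real.cosh z)⁻¹) := by
        refine ContDiff.inv ?_ ?_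
        · exact contDiff_const.add Real.contDiff_cosh
        · intro z; positivity
      exact h1.mul ((hs.of_le (by exact_mod_cast le_top)).comp (contDiff_const.mul Real.contDiff_sinh))
      
    have hconst : iteratedDeriv m
        (fun z : ℝ => (r ^ 2)⁻¹ * ((1 + Real.cosh z)⁻¹ * ψ (r * Real.sinh z))) y
        = (r ^ 2)⁻¹ * iteratedDeriv m
            (fun z : ℝ => (1 + Real.cosh z)⁻¹ * ψ (r * Real.sinh z)) y := by
      rw [← iteratedDerivWithin_univ, ← iteratedDerivWithin_univ]
      exact iteratedDerivWithin_const_mul (Set.mem_univ y) uniqueDiffOn_univ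
        ((r ^ 2)⁻¹) hsm.contDiffAt.contDiffWithinAt
    rw [hinner, hconst, hL r hr y, lval_shift ψ L _ (ne_of_gt hr) y]
    have : (r : ℝ) ^ (-(m : ℤ) - 2) = (r ^ m)⁻¹ * (r ^ 2)⁻¹ := by
      have h1 : -(m : ℤ) - 2 = -((m : ℤ) + ((2:ℕ) : ℤ)) := by push_cast; ring
      rw [h1, zpow_neg, zpow_add₀ (ne_of_gt hr), mul_inv, zpow_natCast, zpow_natCast]
    rw [this]
    ring

/-- Stage B: full representation of the iterated `r`-derivative. -/
lemma stageB (hψ : SmoothHyp ψ) (hs : ContDiff ℝ (⊤ : ℕ∞) ψ) (m n : ℕ) :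
    ∃ L : List Tm, (∀ t ∈ L, t.s ≤ -2) ∧
      ∀ r : ℝ, 0 < r → ∀ y : ℝ,
        iteratedDeriv n (fun r : ℝ => (r ^ m)⁻¹ * iteratedDeriv m
            (fun z : ℝ => (r ^ 2)⁻¹ * (1 + Real.cosh z)⁻¹ * ψ (r * Real.sinh z)) y) r
          = lval ψ L r y := by
  induction n with
  | zero =>
      obtain ⟨L, hLinv, hL⟩ := stageB0 hψ hs m
      exact ⟨L, hLinv, fun r hr y => by simpa [iteratedDeriv_zero] using hL r hr y⟩
  | succ n ih =>
      obtain ⟨L, hLinv, hL⟩ := ih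
      refine ⟨L.flatMap Tm.dr, ?_, fun r hr y => ?_⟩
      · intro t' ht'
        simp only [List.mem_flatMap] at ht'
        obtain ⟨t, htL, ht'⟩ := ht'
        have hst := hLinv t htL
        simp only [Tm.dr, List.mem_cons, List.mem_singleton, List.not_mem_nil, or_false] at ht'
        rcases ht' with h | h <;> subst h <;> simp <;> omega
      · rw [iteratedDeriv_succ]
        have hev : iteratedDeriv n (fun r : ℝ => (r ^ m)⁻¹ * iteratedDeriv m
              (fun z : ℝ => (r ^ 2)⁻¹ * (1 + Real.cosh z)⁻¹ * ψ (r * Real.sinh z)) y)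
            =ᶠ[nhds r] fun r => lval ψ L r y := by
          filter_upwards [IsOpen.mem_nhds isOpen_Ioi hr] with x hx
          exact hL x hx y
        rw [hev.deriv_eq]
        exact (hasDerivAt_lval_r hψ L hr y).deriv

end Derivs


section Est

/-- Schwartz decay of iterated derivatives. -/
lemma schwartz_decay (ψ : SchwartzMap ℝ ℝ) (k M : ℕ) :
    ∃ B : ℝ, 0 < B ∧ ∀ x : ℝ, |iteratedDeriv k (⇑ψ) x| ≤ B * ((1 + |x|) ^ M)⁻¹ := by
  set B0 : ℝ := 2 ^ M * ((Finset.Iic (M, k)).sup (schwartzSeminormFamily ℝ ℝ ℝ)) ψ with hB0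
  refine ⟨B0 + 1, ?_, fun x => ?_⟩
  · have : (0:ℝ) ≤ B0 := by
      rw [hB0]
      positivity
    linarith
  · have h := SchwartzMap.one_add_le_sup_seminorm_apply (𝕜 := ℝ) (m := (M, k))
      (k := M) (n := k) le_rfl le_rfl ψ x
    rw [norm_iteratedFDeriv_eq_norm_iteratedDeriv] at h
    have hx : (0:ℝ) < (1 + |x|) ^ M := by positivity
    have h' : |iteratedDeriv k (⇑ψ) x| * (1 + |x|) ^ M ≤ B0 := by
      calc |iteratedDeriv k (⇑ψ) x| * (1 + |x|) ^ M
          = (1 + ‖x‖) ^ M * ‖iteratedDeriv k (⇑ψ) x‖ := by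
            rw [Real.norm_eq_abs, Real.norm_eq_abs]; ring
        _ ≤ B0 := h
    have h2 : |iteratedDeriv k (⇑ψ) x| ≤ B0 * ((1 + |x|) ^ M)⁻¹ := by
      rw [← div_eq_mul_inv, le_div_iff₀ hx]
      exact h'
    have h3 : B0 * ((1 + |x|) ^ M)⁻¹ ≤ (B0 + 1) * ((1 + |x|) ^ M)⁻¹ := by
      have hnn : (0:ℝ) ≤ ((1 + |x|) ^ M)⁻¹ := by positivity
      nlinarith
    exact h2.trans h3

lemma cosh_le_aux {ρ y : ℝ} (hρ : 1 ≤ ρ) : Real.cosh y ≤ 1 + ρ * |Real.sinh y| := by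
  have h1 : Real.cosh y ≤ 1 + |Real.sinh y| := by
    nlinarith [Real.cosh_sq y, Real.cosh_pos y, abs_nonneg (Real.sinh y),
      sq_abs (Real.sinh y)]
  nlinarith [abs_nonneg (Real.sinh y)]

/-- pointwise bound for a single term -/
lemma tm_pointwise (ψ : SchwartzMap ℝ ℝ) (t : Tm) (ht : t.s ≤ -2) :
    ∃ K : ℝ, 0 < K ∧ ∀ ρ y : ℝ, 1 ≤ ρ →
      |t.val (⇑ψ) ρ y| ≤ K * ρ ^ (-2 : ℤ) *
        ((Real.cosh y)⁻¹ * ((1 + ρ * |Real.sinh y|) ^ 2)⁻¹) := by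
  obtain ⟨B, hB, hBle⟩ := schwartz_decay ψ t.k (t.i + t.l + 3)
  refine ⟨(|t.c| + 1) * B, by positivity, fun ρ y hρ => ?_⟩
  have hρ0 : (0:ℝ) < ρ := lt_of_lt_of_le one_pos hρ
  have hcpos : (0:ℝ) < Real.cosh y := Real.cosh_pos y
  have hppos : (0:ℝ) < (1 + Real.cosh y) ^ t.j := by positivity
  have habs : |t.val (⇑ψ) ρ y| = |t.c| * ρ ^ t.s * |Real.sinh y| ^ t.i * Real.cosh y ^ t.l *
      ((1 + Real.cosh y) ^ t.j)⁻¹ * |iteratedDeriv t.k (⇑ψ) (ρ * Real.sinh y)| := by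
    rw [Tm.val, abs_mul, abs_mul, abs_mul, abs_mul, abs_mul,
      abs_of_pos (zpow_pos hρ0 t.s), abs_pow, abs_pow, abs_of_pos hcpos, abs_inv, abs_pow,
      abs_of_pos (by linarith : (0:ℝ) < 1 + Real.cosh y)]
  set S := |Real.sinh y| with hS
  set X := 1 + ρ * S with hXdef
  have hS0 : 0 ≤ S := abs_nonneg _
  have hX1 : 1 ≤ X := by nlinarith
  have hX0 : 0 < X := by linarith
  have hC1 : 1 ≤ Real.cosh y := Real.one_le_cosh y
  have hCX : Real.cosh y ≤ X := cosh_le_aux hρ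
  have hSX : S ≤ X := by nlinarith
  have hψb : |iteratedDeriv t.k (⇑ψ) (ρ * Real.sinh y)| ≤ B * (X ^ (t.i + t.l + 3))⁻¹ := by
    have h := hBle (ρ * Real.sinh y)
    rwa [abs_mul, abs_of_pos hρ0] at h
  have step1 : |t.val (⇑ψ) ρ y| ≤ |t.c| * ρ ^ (-2:ℤ) * X ^ t.i * X ^ t.l * 1 *
      (B * (X ^ (t.i + t.l + 3))⁻¹) := by
    rw [habs]
    have h1 : ρ ^ t.s ≤ ρ ^ (-2:ℤ) := zpow_le_zpow_right₀ hρ ht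
    have h2 : S ^ t.i ≤ X ^ t.i := pow_le_pow_left₀ hS0 hSX t.i
    have h3 : Real.cosh y ^ t.l ≤ X ^ t.l := pow_le_pow_left₀ (le_of_lt hcpos) hCX t.l
    have h4 : ((1 + Real.cosh y) ^ t.j)⁻¹ ≤ 1 := by
      rw [inv_le_one_iff₀]
      right
      exact one_le_pow₀ (by linarith)
    have hz0 : (0:ℝ) < ρ ^ (-2:ℤ) := zpow_pos hρ0 _
    apply mul_le_mul _ hψb (abs_nonneg _) (by positivity)
    apply mul_le_mul _ h4 (by positivity) (by positivity)
    apply mul_le_mul _ h3 (by positivity) (by positivity)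
    apply mul_le_mul _ h2 (by positivity) (by positivity)
    exact mul_le_mul_of_nonneg_left h1 (abs_nonneg _)
  have hXne : X ≠ 0 := ne_of_gt hX0
  have step2 : |t.c| * ρ ^ (-2:ℤ) * X ^ t.i * X ^ t.l * 1 * (B * (X ^ (t.i + t.l + 3))⁻¹)
      = |t.c| * B * ρ ^ (-2:ℤ) * (X ^ 3)⁻¹ := by
    have hXpow : (X:ℝ) ^ (t.i + t.l + 3) = X ^ t.i * X ^ t.l * X ^ 3 := by
      rw [pow_add, pow_add]
    rw [hXpow]
    field_simp
  have step3 : (X ^ 3 : ℝ)⁻¹ ≤ (Real.cosh y)⁻¹ * ((X ^ 2)⁻¹) := by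
    rw [← mul_inv]
    apply inv_anti₀
    · positivity
    · calc Real.cosh y * X ^ 2 ≤ X * X ^ 2 :=
            mul_le_mul_of_nonneg_right hCX (by positivity)
        _ = X ^ 3 := by ring
  calc |t.val (⇑ψ) ρ y| ≤ |t.c| * B * ρ ^ (-2:ℤ) * (X ^ 3)⁻¹ := by
        rw [← step2]; exact step1
    _ ≤ |t.c| * B * ρ ^ (-2:ℤ) * ((Real.cosh y)⁻¹ * (X ^ 2)⁻¹) :=
        mul_le_mul_of_nonneg_left step3 (by positivity)
    _ ≤ (|t.c| + 1) * B * ρ ^ (-2:ℤ) * ((Real.cosh y)⁻¹ * (X ^ 2)⁻¹) := by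
        have h1 : |t.c| * B ≤ (|t.c| + 1) * B := by nlinarith
        have h2 : (0:ℝ) ≤ ρ ^ (-2:ℤ) * ((Real.cosh y)⁻¹ * (X ^ 2)⁻¹) := by
          have hz0 : (0:ℝ) < ρ ^ (-2:ℤ) := zpow_pos hρ0 _
          positivity
        calc |t.c| * B * ρ ^ (-2:ℤ) * ((Real.cosh y)⁻¹ * (X ^ 2)⁻¹)
            = |t.c| * B * (ρ ^ (-2:ℤ) * ((Real.cosh y)⁻¹ * (X ^ 2)⁻¹)) := by ring
          _ ≤ (|t.c| + 1) * B * (ρ ^ (-2:ℤ) * ((Real.cosh y)⁻¹ * (X ^ 2)⁻¹)) :=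
            mul_le_mul_of_nonneg_right h1 h2
          _ = (|t.c| + 1) * B * ρ ^ (-2:ℤ) * ((Real.cosh y)⁻¹ * (X ^ 2)⁻¹) := by ring

/-- the key integral -/
lemma key_integral {ρ : ℝ} (hρ : 0 < ρ) :
    Integrable (fun y => Real.cosh y * (1 + (ρ * Real.sinh y) ^ 2)⁻¹) ∧
      ∫ y, Real.cosh y * (1 + (ρ * Real.sinh y) ^ 2)⁻¹ = π / ρ := by
  have hder : ∀ x ∈ (Set.univ : Set ℝ),
      HasDerivWithinAt (fun y => ρ * Real.sinh y) (ρ * Real.cosh x) Set.univ x :=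
    fun x _ => ((Real.hasDerivAt_sinh x).const_mul ρ).hasDerivWithinAt
  have hinj : Set.InjOn (fun y => ρ * Real.sinh y) Set.univ := fun a _ b _ h =>
    Real.sinh_injective (mul_left_cancel₀ (ne_of_gt hρ) h)
  have himg : (fun y => ρ * Real.sinh y) '' Set.univ = Set.univ := by
    rw [Set.image_univ, Set.range_eq_univ]
    intro z
    refine ⟨Real.arsinh (z / ρ), ?_⟩
    show ρ * Real.sinh (Real.arsinh (z / ρ)) = z
    rw [Real.sinh_arsinh]
    field_simp
  have heq : (fun x => |ρ * Real.cosh x| • (1 + (ρ * Real.sinh x) ^ 2)⁻¹)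
      = fun x => ρ * (Real.cosh x * (1 + (ρ * Real.sinh x) ^ 2)⁻¹) := by
    funext x
    rw [smul_eq_mul, abs_of_pos (by positivity : (0:ℝ) < ρ * Real.cosh x)]
    ring
  have hint := integrableOn_image_iff_integrableOn_abs_deriv_smul MeasurableSet.univ hder hinj
    (fun x : ℝ => (1 + x ^ 2)⁻¹)
  rw [himg] at hint
  have h1 : IntegrableOn (fun x : ℝ => (1 + x ^ 2)⁻¹) Set.univ volume :=
    integrable_inv_one_add_sq.integrableOn
  have h2 := hint.mp h1
  rw [heq] at h2
  have h2' : Integrable (fun x : ℝ => ρ * (Real.cosh x * (1 + (ρ * Real.sinh x) ^ 2)⁻¹)) :=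
    integrableOn_univ.mp h2
  have hI : Integrable (fun y => Real.cosh y * (1 + (ρ * Real.sinh y) ^ 2)⁻¹) := by
    have := h2'.const_mul ρ⁻¹
    have heq2 : (fun x : ℝ => ρ⁻¹ * (ρ * (Real.cosh x * (1 + (ρ * Real.sinh x) ^ 2)⁻¹)))
        = fun y => Real.cosh y * (1 + (ρ * Real.sinh y) ^ 2)⁻¹ := by
      funext x
      field_simp
    rwa [heq2] at this
  refine ⟨hI, ?_⟩
  have hval := integral_image_eq_integral_abs_deriv_smul MeasurableSet.univ hder hinj
    (fun x : ℝ => (1 + x ^ 2)⁻¹)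
  rw [himg] at hval
  rw [setIntegral_univ, setIntegral_univ, heq, integral_const_mul] at hval
  rw [integral_univ_inv_one_add_sq] at hval
  field_simp at hval ⊢
  linarith [hval]

/-- interpolation between `L¹` and `L^∞` -/
lemma interp {f : ℝ → ℝ} {p : ℝ≥0∞} (hp : 1 ≤ p) {M K : ℝ}
    (hsup : ∀ y, |f y| ≤ M) (hK : eLpNorm f 1 volume ≤ ENNReal.ofReal K) :
    eLpNorm f p volume ≤
      ENNReal.ofReal M ^ (1 - 1 / p.toReal) * ENNReal.ofReal K ^ (1 / p.toReal) := by
  by_cases hptop : p = ⊤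
  · subst hptop
    simp only [ENNReal.toReal_top, div_zero, sub_zero, ENNReal.rpow_one, ENNReal.rpow_zero,
      mul_one]
    rw [eLpNorm_exponent_top]
    exact eLpNormEssSup_le_of_ae_bound (Filter.Eventually.of_forall fun y => by
      rw [Real.norm_eq_abs]; exact hsup y)
  · have hp0 : p ≠ 0 := (zero_lt_one.trans_le hp).ne'
    set q := p.toReal with hq
    have hq1 : (1:ℝ) ≤ q := by
      have := ENNReal.toReal_mono hptop hp
      simpa using this
    have hq0 : (0:ℝ) < q := lt_of_lt_of_le one_pos hq1
    rw [eLpNorm_eq_lintegral_rpow_enorm_toReal hp0 hptop]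
    have hMfin : ENNReal.ofReal M ^ (q - 1) ≠ ⊤ :=
      ENNReal.rpow_ne_top_of_nonneg (by linarith) ENNReal.ofReal_ne_top
    have hmono : ∫⁻ y, (‖f y‖₊ : ℝ≥0∞) ^ q ≤ ENNReal.ofReal M ^ (q - 1) * ENNReal.ofReal K := by
      calc ∫⁻ y, (‖f y‖₊ : ℝ≥0∞) ^ q
          ≤ ∫⁻ y, ENNReal.ofReal M ^ (q - 1) * (‖f y‖₊ : ℝ≥0∞) := by
            apply lintegral_mono
            intro y
            have h1 : (‖f y‖₊ : ℝ≥0∞) ≤ ENNReal.ofReal M := by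
              rw [← enorm_eq_nnnorm, Real.enorm_eq_ofReal_abs]
              exact ENNReal.ofReal_le_ofReal (hsup y)
            calc (‖f y‖₊ : ℝ≥0∞) ^ q = (‖f y‖₊ : ℝ≥0∞) ^ (q - 1) * (‖f y‖₊ : ℝ≥0∞) := by
                  have hqe : q = (q - 1) + 1 := by ring
                  nth_rewrite 1 [hqe]
                  rw [ENNReal.rpow_add_of_nonneg _ _ (by linarith) zero_le_one,
                    ENNReal.rpow_one]
              _ ≤ ENNReal.ofReal M ^ (q - 1) * (‖f y‖₊ : ℝ≥0∞) := by
                  exact mul_le_mul_left (ENNReal.rpow_le_rpow h1 (by linarith)) _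
        _ = ENNReal.ofReal M ^ (q - 1) * ∫⁻ y, (‖f y‖₊ : ℝ≥0∞) :=
            lintegral_const_mul' _ _ hMfin
        _ ≤ ENNReal.ofReal M ^ (q - 1) * ENNReal.ofReal K := by
            apply mul_le_mul_right
            simp_rw [← enorm_eq_nnnorm]
            rw [← eLpNorm_one_eq_lintegral_enorm]
            exact hK
    calc (∫⁻ y, (‖f y‖₊ : ℝ≥0∞) ^ q) ^ (1 / q)
        ≤ (ENNReal.ofReal M ^ (q - 1) * ENNReal.ofReal K) ^ (1 / q) :=
          ENNReal.rpow_le_rpow hmono (by positivity)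
      _ = ENNReal.ofReal M ^ (1 - 1 / q) * ENNReal.ofReal K ^ (1 / q) := by
          have he : (q - 1) * (1 / q) = 1 - 1 / q := by field_simp
          rw [ENNReal.mul_rpow_of_nonneg _ _ (by positivity), ← ENNReal.rpow_mul, he]

/-- per-term eLpNorm estimate -/
lemma tm_eLpNorm (ψ : SchwartzMap ℝ ℝ) (hc : ∀ k, Continuous (iteratedDeriv k (⇑ψ)))
    (t : Tm) (ht : t.s ≤ -2) {p : ℝ≥0∞} (hp : 1 ≤ p) :
    ∃ C : ℝ, 0 < C ∧ ∀ ρ : ℝ, 1 ≤ ρ →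
      eLpNorm (fun y => t.val (⇑ψ) ρ y) p volume
        ≤ ENNReal.ofReal (C * ρ ^ (-2 - 1 / p.toReal)) := by
  obtain ⟨K, hK, hKle⟩ := tm_pointwise ψ t ht
  refine ⟨K * π, by positivity, fun ρ hρ => ?_⟩
  have hρ0 : (0:ℝ) < ρ := lt_of_lt_of_le one_pos hρ
  set u := 1 / p.toReal with hu
  have hu0 : 0 ≤ u := by positivity
  have hu1 : u ≤ 1 := by
    by_cases hptop : p = ⊤
    · simp [hu, hptop]
    · have hq1 : (1:ℝ) ≤ p.toReal := by
        have := ENNReal.toReal_mono hptop hp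
        simpa using this
      rw [hu]
      rw [div_le_one (by linarith)]
      linarith
  set M : ℝ := K * ρ ^ (-2 : ℝ) with hM
  have hrpow2 : (ρ : ℝ) ^ (-2:ℤ) = ρ ^ (-2:ℝ) := by
    rw [← Real.rpow_intCast]
    norm_num
  have hM0 : 0 < M := by
    rw [hM]
    positivity
  have hsup : ∀ y, |t.val (⇑ψ) ρ y| ≤ M := by
    intro y
    have h := hKle ρ y hρ
    have h1 : (Real.cosh y)⁻¹ ≤ 1 := by
      rw [inv_le_one_iff₀]; right; exact Real.one_le_cosh y
    have h2 : ((1 + ρ * |Real.sinh y|) ^ 2)⁻¹ ≤ 1 := by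
      rw [inv_le_one_iff₀]; right
      apply one_le_pow₀
      nlinarith [abs_nonneg (Real.sinh y)]
    calc |t.val (⇑ψ) ρ y| ≤ K * ρ ^ (-2:ℤ) *
          ((Real.cosh y)⁻¹ * ((1 + ρ * |Real.sinh y|) ^ 2)⁻¹) := h
      _ ≤ K * ρ ^ (-2:ℤ) * (1 * 1) := by
          apply mul_le_mul_of_nonneg_left _ (by positivity)
          apply mul_le_mul h1 h2 (by positivity) zero_le_one
      _ = M := by rw [hM, ← hrpow2]; ring
  have hL1 : eLpNorm (fun y => t.val (⇑ψ) ρ y) 1 volume ≤ ENNReal.ofReal (M * (π / ρ)) := by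
    set g : ℝ → ℝ := fun y => M * (Real.cosh y * (1 + (ρ * Real.sinh y) ^ 2)⁻¹) with hg
    have hgle : ∀ y, ‖t.val (⇑ψ) ρ y‖ ≤ g y := by
      intro y
      rw [Real.norm_eq_abs]
      have h := hKle ρ y hρ
      have hcosh := Real.cosh_pos y
      have h1 : (Real.cosh y)⁻¹ ≤ Real.cosh y := by
        have h2 := Real.one_le_cosh y
        calc (Real.cosh y)⁻¹ ≤ 1 := by rw [inv_le_one_iff₀]; right; exact h2
          _ ≤ Real.cosh y := h2
      have h3 : ((1 + ρ * |Real.sinh y|) ^ 2)⁻¹ ≤ (1 + (ρ * Real.sinh y) ^ 2)⁻¹ := by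
        apply inv_anti₀
        · positivity
        · nlinarith [mul_nonneg hρ0.le (abs_nonneg (Real.sinh y)), sq_abs (Real.sinh y),
            mul_pow ρ |Real.sinh y| 2, mul_pow ρ (Real.sinh y) 2]
      calc |t.val (⇑ψ) ρ y| ≤ K * ρ ^ (-2:ℤ) *
            ((Real.cosh y)⁻¹ * ((1 + ρ * |Real.sinh y|) ^ 2)⁻¹) := h
        _ ≤ K * ρ ^ (-2:ℤ) * (Real.cosh y * (1 + (ρ * Real.sinh y) ^ 2)⁻¹) := by
            apply mul_le_mul_of_nonneg_left _ (by positivity)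
            apply mul_le_mul h1 h3 (by positivity) (le_of_lt hcosh)
        _ = g y := by rw [hg, hM, ← hrpow2]
      
    have hInt : Integrable g := ((key_integral hρ0).1.const_mul M)
    have hgnn : ∀ y, 0 ≤ g y := by
      intro y
      have := Real.cosh_pos y
      rw [hg]
      positivity
    calc eLpNorm (fun y => t.val (⇑ψ) ρ y) 1 volume ≤ eLpNorm g 1 volume :=
          eLpNorm_mono_ae_real (Filter.Eventually.of_forall hgle)
      _ = ∫⁻ y, (‖g y‖₊ : ℝ≥0∞) := eLpNorm_one_eq_lintegral_enorm
      _ = ∫⁻ y, ENNReal.ofReal (g y) := by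
          congr 1
          funext y
          rw [← enorm_eq_nnnorm, Real.enorm_eq_ofReal_abs, abs_of_nonneg (hgnn y)]
      _ = ENNReal.ofReal (∫ y, g y) :=
          (ofReal_integral_eq_lintegral_ofReal hInt
            (Filter.Eventually.of_forall hgnn)).symm
      _ = ENNReal.ofReal (M * (π / ρ)) := by
          rw [hg, integral_const_mul, (key_integral hρ0).2]
  have hi := interp hp hsup hL1
  calc eLpNorm (fun y => t.val (⇑ψ) ρ y) p volume
      ≤ ENNReal.ofReal M ^ (1 - u) * ENNReal.ofReal (M * (π / ρ)) ^ u := hi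
    _ = ENNReal.ofReal (M ^ (1 - u) * (M * (π / ρ)) ^ u) := by
        rw [ENNReal.ofReal_rpow_of_pos hM0,
          ENNReal.ofReal_rpow_of_pos (by positivity),
          ← ENNReal.ofReal_mul (by positivity)]
    _ ≤ ENNReal.ofReal (K * π * ρ ^ (-2 - u)) := by
        apply ENNReal.ofReal_le_ofReal
        have hpi : (1:ℝ) ≤ π := by linarith [Real.pi_gt_three]
        have e1 : M ^ (1 - u) * (M * (π / ρ)) ^ u = M * (π / ρ) ^ u := by
          rw [Real.mul_rpow (le_of_lt hM0) (by positivity), ← mul_assoc,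
            ← Real.rpow_add hM0]
          norm_num
        rw [e1]
        have e2 : (π / ρ) ^ u = π ^ u * (ρ ^ u)⁻¹ := by
          rw [Real.div_rpow (by positivity) (le_of_lt hρ0)]
          rw [div_eq_mul_inv]
        have e3 : π ^ u ≤ π := by
          calc π ^ u ≤ π ^ (1:ℝ) := Real.rpow_le_rpow_of_exponent_le hpi hu1
            _ = π := Real.rpow_one π
        have e4 : M * (π / ρ) ^ u = K * π ^ u * (ρ ^ (-2:ℝ) * (ρ ^ u)⁻¹) := by
          rw [e2, hM]; ring
        rw [e4]
        have e5 : ρ ^ (-2:ℝ) * (ρ ^ u)⁻¹ = ρ ^ (-2 - u) := by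
          rw [← Real.rpow_neg (le_of_lt hρ0) u, ← Real.rpow_add hρ0]
          ring_nf
        rw [e5]
        have e6 : (0:ℝ) ≤ ρ ^ (-2 - u) := Real.rpow_nonneg (le_of_lt hρ0) _
        exact mul_le_mul_of_nonneg_right (mul_le_mul_of_nonneg_left e3 hK.le) e6
    _ = ENNReal.ofReal (K * π * ρ ^ (-2 - 1 / p.toReal)) := by rw [hu]

lemma tm_cont {ψ : ℝ → ℝ} (hc : ∀ k, Continuous (iteratedDeriv k ψ)) (t : Tm) (ρ : ℝ) :
    Continuous (fun y => t.val ψ ρ y) := by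
  unfold Tm.val
  have h4 : Continuous (fun y : ℝ => iteratedDeriv t.k ψ (ρ * Real.sinh y)) :=
    (hc t.k).comp (continuous_const.mul Real.continuous_sinh)
  have h3 : Continuous (fun y : ℝ => ((1 + Real.cosh y) ^ t.j)⁻¹) := by
    apply Continuous.inv₀
    · exact (continuous_const.add Real.continuous_cosh).pow t.j
    · intro y
      have := Real.cosh_pos y
      positivity
  exact (((continuous_const.mul (Real.continuous_sinh.pow t.i)).mul
    (Real.continuous_cosh.pow t.l)).mul h3).mul h4

lemma lval_cont {ψ : ℝ → ℝ} (hc : ∀ k, Continuous (iteratedDeriv k ψ)) (L : List Tm) (ρ : ℝ) :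
    Continuous (fun y => lval ψ L ρ y) := by
  induction L with
  | nil => simpa [lval] using continuous_const
  | cons a l ih =>
      have : (fun y => lval ψ (a :: l) ρ y) = fun y => a.val ψ ρ y + lval ψ l ρ y := by
        funext y
        rw [lval_cons]
      rw [this]
      exact (tm_cont hc a ρ).add ih

/-- eLpNorm estimate for a sum of terms -/
lemma list_eLpNorm (ψ : SchwartzMap ℝ ℝ) (hc : ∀ k, Continuous (iteratedDeriv k (⇑ψ)))
    (L : List Tm) (hL : ∀ t ∈ L, t.s ≤ -2) {p : ℝ≥0∞} (hp : 1 ≤ p) :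
    ∃ C : ℝ, 0 < C ∧ ∀ ρ : ℝ, 1 ≤ ρ →
      eLpNorm (fun y => lval (⇑ψ) L ρ y) p volume
        ≤ ENNReal.ofReal (C * ρ ^ (-2 - 1 / p.toReal)) := by
  induction L with
  | nil =>
      refine ⟨1, one_pos, fun ρ hρ => ?_⟩
      have : (fun y => lval (⇑ψ) [] ρ y) = (fun _ : ℝ => (0:ℝ)) := by
        funext y; rw [lval_nil]
      rw [this, eLpNorm_zero']
      exact zero_le
  | cons a l ih =>
      obtain ⟨C1, hC1, h1⟩ := tm_eLpNorm ψ hc a (hL a (by simp)) hp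
      obtain ⟨C2, hC2, h2⟩ := ih (fun t ht => hL t (by simp [ht]))
      refine ⟨C1 + C2, by positivity, fun ρ hρ => ?_⟩
      have hρ0 : (0:ℝ) < ρ := lt_of_lt_of_le one_pos hρ
      have hsplit : (fun y => lval (⇑ψ) (a :: l) ρ y)
          = fun y => a.val (⇑ψ) ρ y + lval (⇑ψ) l ρ y := by
        funext y; rw [lval_cons]
      rw [hsplit]
      calc eLpNorm (fun y => a.val (⇑ψ) ρ y + lval (⇑ψ) l ρ y) p volume
          ≤ eLpNorm (fun y => a.val (⇑ψ) ρ y) p volume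
            + eLpNorm (fun y => lval (⇑ψ) l ρ y) p volume :=
            eLpNorm_add_le ((tm_cont hc a ρ).aestronglyMeasurable)
              ((lval_cont hc l ρ).aestronglyMeasurable) hp
        _ ≤ ENNReal.ofReal (C1 * ρ ^ (-2 - 1 / p.toReal))
            + ENNReal.ofReal (C2 * ρ ^ (-2 - 1 / p.toReal)) :=
            add_le_add (h1 ρ hρ) (h2 ρ hρ)
        _ = ENNReal.ofReal ((C1 + C2) * ρ ^ (-2 - 1 / p.toReal)) := by
            rw [← ENNReal.ofReal_add (by positivity) (by positivity)]
            congr 1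
            ring

end Est

end Stmt6

/-- estimate for `G(ρ,y) = ρ^{-2}(1+cosh y)^{-1} ψ(ρ sinh y)`:
`‖∂_ρ^n (ρ^{-m} ∂_y^m G)‖_{L^p_y} ≤ C ρ^{-2-1/p}`. -/
theorem stmt_6 (ψ : SchwartzMap ℝ ℝ) (n m : ℕ) (p : ℝ≥0∞) (hp : 1 ≤ p) :
    ∃ C : ℝ, 0 < C ∧ ∀ ρ : ℝ, 1 ≤ ρ →
      eLpNorm (fun y : ℝ =>
          iteratedDeriv n (fun r : ℝ =>
            (r ^ m)⁻¹ *
              iteratedDeriv m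
                (fun z : ℝ => (r ^ 2)⁻¹ * (1 + Real.cosh z)⁻¹ * ψ (r * Real.sinh z)) y) ρ)
        p volume
      ≤ ENNReal.ofReal (C * ρ ^ (-2 - 1 / p.toReal)) := by
  have hs : ContDiff ℝ (⊤ : ℕ∞) (⇑ψ) := ψ.smooth ⊤
  have hc : ∀ k : ℕ, Continuous (iteratedDeriv k (⇑ψ)) := by
    intro k
    have h1 : ContDiff ℝ (k : ℕ) (⇑ψ) := hs.of_le (by exact_mod_cast le_top)
    exact h1.continuous_iteratedDeriv k (by exact_mod_cast le_rfl)
  have hψ : Stmt6.SmoothHyp (⇑ψ) := by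
    intro k
    constructor
    · intro x
      have h1 : ContDiff ℝ ((k + 1 : ℕ)) (⇑ψ) := hs.of_le (by exact_mod_cast le_top)
      have h2 := (h1.differentiable_iteratedDeriv k
        (by exact_mod_cast Nat.lt_succ_self k)).differentiableAt (x := x)
      have h3 := h2.hasDerivAt
      rwa [← iteratedDeriv_succ] at h3
    · exact hc k
  obtain ⟨L, hLs, hL⟩ := Stmt6.stageB (ψ := ⇑ψ) hψ hs m n
  obtain ⟨C, hC, hb⟩ := Stmt6.list_eLpNorm ψ hc L hLs hp
  refine ⟨C, hC, fun ρ hρ => ?_⟩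
  have hρ0 : (0:ℝ) < ρ := lt_of_lt_of_le one_pos hρ
  have heq : (fun y : ℝ =>
      iteratedDeriv n (fun r : ℝ =>
        (r ^ m)⁻¹ *
          iteratedDeriv m
            (fun z : ℝ => (r ^ 2)⁻¹ * (1 + Real.cosh z)⁻¹ * ψ (r * Real.sinh z)) y) ρ)
      = fun y => Stmt6.lval (⇑ψ) L ρ y := funext fun y => hL ρ hρ0 y
  rw [heq]
  exact hb ρ hρ
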